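/- Let p ≥ 3 be a prime and a, b, c ∈ ℰ_p with |b − 1|_p + |c − 1|_p ≠ 0, and let g(u) = a(bu² + 1)/(u² + c). Then g has a unique fixed point x₀ in ℰ_p. -/

import Mathlib

/-- The mapping `g(u) = a(bu² + 1)/(u² + c)` on `ℚ_p`. -/
noncomputable def lamMap (p : ℕ) [Fact p.Prime] (a b c : ℚ_[p]) (u : ℚ_[p]) : ℚ_[p] :=
  a * ((b * u ^ 2 + 1) / (u ^ 2 + c))

/-- `ℰ_p = {x ∈ ℚ_p : |x|_p = 1, |x - 1|_p < p^{-1/(p-1)}}`. -/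
noncomputable def padicExpDomain (p : ℕ) [Fact p.Prime] : Set ℚ_[p] :=
  {x | ‖x‖ = 1 ∧ ‖x - 1‖ < (p : ℝ) ^ (-(1 : ℝ) / ((p : ℝ) - 1))}

section Aux

variable {p : ℕ} [Fact p.Prime]

lemma aux_two_norm (hp : 3 ≤ p) : ‖(2 : ℚ_[p])‖ = 1 := by
  have h2 : ((2 : ℤ) : ℚ_[p]) = (2 : ℚ_[p]) := by norm_cast
  have hle : ‖(2 : ℚ_[p])‖ ≤ 1 := by rw [← h2]; exact Padic.norm_int_le_one 2
  rcases lt_or_eq_of_le hle with h | h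
  · exfalso
    rw [← h2, Padic.norm_intCast_lt_one_iff] at h
    have := Int.le_of_dvd (by norm_num) h
    omega
  · exact h

lemma aux_norm_add_small (hp : 3 ≤ p) {w : ℚ_[p]} (hw : ‖w‖ < 1) :
    ‖2 + w‖ = 1 := by
  rw [Padic.add_eq_max_of_ne (by rw [aux_two_norm hp]; exact ne_of_gt hw)]
  rw [aux_two_norm hp]
  exact max_eq_left hw.le

lemma aux_exp_lt_one (hp : 3 ≤ p) : (p : ℝ) ^ (-(1 : ℝ) / ((p : ℝ) - 1)) < 1 := by
  have hp1 : (1 : ℝ) < p := by exact_mod_cast lt_of_lt_of_le (by norm_num) hp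
  apply Real.rpow_lt_one_of_one_lt_of_neg hp1
  have : (0 : ℝ) < (p : ℝ) - 1 := by linarith
  rw [div_neg_iff]
  right
  constructor <;> [norm_num; exact this]

lemma aux_inv_lt_exp (hp : 3 ≤ p) : (p : ℝ)⁻¹ < (p : ℝ) ^ (-(1 : ℝ) / ((p : ℝ) - 1)) := by
  have hp1 : (1 : ℝ) < p := by exact_mod_cast lt_of_lt_of_le (by norm_num) hp
  have hp2 : (2 : ℝ) ≤ (p : ℝ) - 1 := by
    have : (3 : ℝ) ≤ p := by exact_mod_cast hp
    linarith
  have hlt : (-1 : ℝ) < -(1 : ℝ) / ((p : ℝ) - 1) := by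
    rw [neg_div, neg_lt_neg_iff, div_lt_one (by linarith)]
    linarith
  have h := Real.rpow_lt_rpow_of_exponent_lt hp1 hlt
  rwa [Real.rpow_neg_one] at h

end Aux

/-- for `p ≥ 3` prime and `a, b, c ∈ ℰ_p` with `|b-1|_p + |c-1|_p ≠ 0`, the map
`g(u) = a(bu²+1)/(u²+c)` has a unique fixed point in `ℰ_p`. -/
theorem lamMap_unique_fixed_point_in_Ep
    (p : ℕ) [Fact p.Prime] (hp : 3 ≤ p)
    (a b c : ℚ_[p]) (ha : a ∈ padicExpDomain p) (hb : b ∈ padicExpDomain p)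
    (hc : c ∈ padicExpDomain p) (hbc : ‖b - 1‖ + ‖c - 1‖ ≠ 0) :
    ∃! x₀ : ℚ_[p], x₀ ∈ padicExpDomain p ∧ lamMap p a b c x₀ = x₀ := by
  obtain ⟨haN, ha1⟩ := ha
  obtain ⟨hbN, hb1⟩ := hb
  obtain ⟨hcN, hc1⟩ := hc
  have hexp1 := aux_exp_lt_one (p := p) hp
  have ha1' : ‖a - 1‖ < 1 := lt_trans ha1 hexp1
  have hb1' : ‖b - 1‖ < 1 := lt_trans hb1 hexp1
  have hc1' : ‖c - 1‖ < 1 := lt_trans hc1 hexp1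
  have hab1' : ‖a * b - 1‖ < 1 := by
    have : a * b - 1 = (a - 1) * b + (b - 1) := by ring
    rw [this]
    refine lt_of_le_of_lt (Padic.nonarchimedean _ _) (max_lt ?_ hb1')
    rw [Padic.padicNormE.mul, hbN, mul_one]; exact ha1'
  -- the fixed point equation, for x in the small ball
  have key : ∀ x : ℚ_[p], ‖x - 1‖ < 1 →
      (lamMap p a b c x = x ↔ x ^ 3 - (a * b) * x ^ 2 + c * x - a = 0) := by
    intro x hx
    have hx2 : ‖x ^ 2 - 1‖ < 1 := by
      have : x ^ 2 - 1 = (x - 1) * (x + 1) := by ring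
      rw [this, Padic.padicNormE.mul]
      have hxp1 : ‖x + 1‖ ≤ 1 := by
        have : x + 1 = 2 + (x - 1) := by ring
        rw [this, aux_norm_add_small hp hx]
      calc ‖x - 1‖ * ‖x + 1‖ ≤ ‖x - 1‖ * 1 :=
            mul_le_mul_of_nonneg_left hxp1 (norm_nonneg _)
        _ = ‖x - 1‖ := mul_one _
        _ < 1 := hx
    have hden : x ^ 2 + c ≠ 0 := by
      have : x ^ 2 + c = 2 + ((x ^ 2 - 1) + (c - 1)) := by ring
      intro h0
      rw [h0] at this
      have h1 : ‖(0 : ℚ_[p])‖ = 1 := by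
        rw [this]
        exact aux_norm_add_small hp
          (lt_of_le_of_lt (Padic.nonarchimedean _ _) (max_lt hx2 hc1'))
      simp at h1
    unfold lamMap
    rw [mul_div_assoc' ,div_eq_iff hden]
    constructor <;> intro h <;> [linear_combination -h; linear_combination -h]
  -- set up Hensel's lemma over ℤ_[p]
  set A : ℤ_[p] := ⟨a, le_of_eq haN⟩ with hA
  set B : ℤ_[p] := ⟨b, le_of_eq hbN⟩ with hB
  set Cc : ℤ_[p] := ⟨c, le_of_eq hcN⟩ with hCc
  set F : Polynomial ℤ_[p] :=
    Polynomial.X ^ 3 - Polynomial.C (A * B) * Polynomial.X ^ 2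
      + Polynomial.C Cc * Polynomial.X - Polynomial.C A with hF
  have hevalF : ∀ z : ℤ_[p], F.eval z = z ^ 3 - (A * B) * z ^ 2 + Cc * z - A := by
    intro z; simp [hF]
  have hderivF : F.derivative.eval 1 = 3 - 2 * (A * B) + Cc := by
    simp [hF]
    ring
  have hcoeAB : ((A * B : ℤ_[p]) : ℚ_[p]) = a * b := rfl
  have hnd : ‖F.derivative.eval 1‖ = 1 := by
    rw [hderivF, PadicInt.norm_def]
    have : ((3 - 2 * (A * B) + Cc : ℤ_[p]) : ℚ_[p]) = 3 - 2 * (a * b) + c := by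
      push_cast [hA, hB, hCc]
      rfl
    rw [this]
    have h2 : (3 : ℚ_[p]) - 2 * (a * b) + c = 2 + ((c - 1) + 2 * (1 - a * b)) := by ring
    rw [h2]
    apply aux_norm_add_small hp
    refine lt_of_le_of_lt (Padic.nonarchimedean _ _) (max_lt hc1' ?_)
    rw [Padic.padicNormE.mul, aux_two_norm hp, one_mul, norm_sub_rev]
    exact hab1'
  have hne : ‖F.eval 1‖ < 1 := by
    rw [hevalF, PadicInt.norm_def]
    have : ((1 ^ 3 - (A * B) * 1 ^ 2 + Cc * 1 - A : ℤ_[p]) : ℚ_[p])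
        = -(a * b - 1) + (c - 1) - (a - 1) := by
      push_cast [hA, hB, hCc]
      ring_nf
      change (1:ℚ_[p]) - a * b + c * 1 - a = 1 - a - a * b + c
      ring
    rw [this, sub_eq_add_neg]
    refine lt_of_le_of_lt (Padic.nonarchimedean _ _)
      (max_lt ?_ (by rwa [norm_neg]))
    refine lt_of_le_of_lt (Padic.nonarchimedean _ _)
      (max_lt (by rwa [norm_neg]) hc1')
  have hhyp : ‖F.eval 1‖ < ‖F.derivative.eval 1‖ ^ 2 := by
    rw [hnd, one_pow]; exact hne
  obtain ⟨z, hz0, hz1, -, huniq⟩ := hensels_lemma hhyp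
  simp only [Polynomial.coe_aeval_eq_eval] at hz0 hz1 huniq
  rw [hnd] at hz1 huniq
  have hz1' : ‖z - 1‖ ≤ (p : ℝ)⁻¹ := by
    have h := (PadicInt.norm_lt_pow_iff_norm_le_pow_sub_one (z - 1) 0).mp
      (by simpa using hz1)
    simpa [zpow_neg] using h
  have hAc : ((A : ℤ_[p]) : ℚ_[p]) = a := rfl
  have hBc : ((B : ℤ_[p]) : ℚ_[p]) = b := rfl
  have hCcc : ((Cc : ℤ_[p]) : ℚ_[p]) = c := rfl
  have hzc : ‖(z : ℚ_[p]) - 1‖ ≤ (p : ℝ)⁻¹ := by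
    have hc1 : ((z - 1 : ℤ_[p]) : ℚ_[p]) = (z : ℚ_[p]) - 1 := by push_cast; ring
    rw [← hc1, ← PadicInt.norm_def]
    exact hz1'
  have hpinv1 : (p : ℝ)⁻¹ < 1 := by
    rw [inv_lt_one_iff₀]
    right
    exact_mod_cast lt_of_lt_of_le (by norm_num) hp
  have hzlt : ‖(z : ℚ_[p]) - 1‖ < 1 := lt_of_le_of_lt hzc hpinv1
  -- the fixed point
  refine ⟨(z : ℚ_[p]), ⟨⟨?_, ?_⟩, ?_⟩, ?_⟩
  · -- norm one
    have h1 : (z : ℚ_[p]) = 1 + ((z : ℚ_[p]) - 1) := by ring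
    rw [h1, Padic.add_eq_max_of_ne (by rw [norm_one]; exact ne_of_gt hzlt), norm_one]
    exact max_eq_left hzlt.le
  · exact lt_of_le_of_lt hzc (aux_inv_lt_exp hp)
  · -- fixed point property
    apply (key _ hzlt).mpr
    have h0 : z ^ 3 - (A * B) * z ^ 2 + Cc * z - A = 0 := by rw [← hevalF]; exact hz0
    have h0q : ((z ^ 3 - (A * B) * z ^ 2 + Cc * z - A : ℤ_[p]) : ℚ_[p]) = 0 := by
      rw [h0]; rfl
    push_cast [hAc, hBc, hCcc] at h0q
    linear_combination h0q
  · -- uniqueness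
    rintro y ⟨⟨hyN, hy1⟩, hyfix⟩
    have hy1' : ‖y - 1‖ < 1 := lt_trans hy1 hexp1
    have hfy : y ^ 3 - (a * b) * y ^ 2 + c * y - a = 0 := (key y hy1').mp hyfix
    set Y : ℤ_[p] := ⟨y, le_of_eq hyN⟩ with hY
    have hYc : ((Y : ℤ_[p]) : ℚ_[p]) = y := rfl
    have hFY : F.eval Y = 0 := by
      rw [hevalF]
      apply Subtype.coe_injective
      push_cast [hYc, hAc, hBc, hCcc]
      linear_combination hfy
    have hYnorm : ‖Y - 1‖ < 1 := by
      rw [PadicInt.norm_def]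
      have : ((Y - 1 : ℤ_[p]) : ℚ_[p]) = y - 1 := by push_cast [hYc]; ring
      rw [this]
      exact hy1'
    have hYz : Y = z := huniq Y hFY hYnorm
    calc y = ((Y : ℤ_[p]) : ℚ_[p]) := rfl
      _ = (z : ℚ_[p]) := by rw [hYz]
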